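/- Let m ≥ 1, let R be a symmetric m×m integer matrix, and let v, w ∈ {0,1}^m. Define η(v; R, w) := [(v + w) − (v ∗ w)] R (v ∗ w)^T over ℤ. Then η(v; R, w) = v [D_{w̄} R D_w + D_{w R D_w}] v^T = v [D_w R D_{w̄} + D_{w R D_w}] v^T, where for an integer row vector x, D_x denotes the diagonal matrix diag(x), w̄ := 𝟙 − w with 𝟙 the all-ones vector, and w R D_w is the row vector obtained by right-multiplying w by R D_w. -/
import Mathlib


open Complex Matrix

namespace CliffordHierarchy

noncomputable section

variable {ι : Type*} [Fintype ι] [DecidableEq ι]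

/-- Embed a binary vector (entries in `ZMod 2`) into ℤ as a 0/1 vector. -/
def toZ (v : ι → ZMod 2) : ι → ℤ := fun i => ((v i).val : ℤ)

/-- Reduce an integer vector mod 2, viewed in `ZMod 2`. -/
def red2 (a : ι → ℤ) : ι → ZMod 2 := fun i => ((a i : ZMod 2))

/-- Dot product of integer row vectors, over ℤ. -/
def dotZ (x y : ι → ℤ) : ℤ := ∑ i, x i * y i

/-- Bilinear form `x R yᵀ` over ℤ. -/
def bil (R : Matrix ι ι ℤ) (x y : ι → ℤ) : ℤ := ∑ i, ∑ j, x i * R i j * y j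

/-- η(v; R, w) = [(v + w) − (v ∗ w)] R (v ∗ w)ᵀ, with ∗ the entrywise product. -/
def eta (R : Matrix ι ι ℤ) (v w : ι → ℤ) : ℤ := bil R (v + w - v * w) (v * w)

/-- bitwise XOR of 0/1 integer vectors, re-embedded as a 0/1 integer vector. -/
def vxor (v w : ι → ℤ) : ι → ℤ := fun i => v i + w i - 2 * (v i * w i)

/-- ξ_k = exp(2πi/2^k). -/
def xi (k : ℕ) : ℂ := Complex.exp (2 * Real.pi * Complex.I / 2 ^ k)

/-- τ_R^{(k)} = diag(ξ^{v R vᵀ mod 2^k}), indexed by v ∈ {0,1}^m. -/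
def tau (k : ℕ) (R : Matrix ι ι ℤ) : Matrix (ι → ZMod 2) (ι → ZMod 2) ℂ :=
  Matrix.diagonal fun v => xi k ^ (bil R (toZ v) (toZ v) % 2 ^ k)

/-- The Hermitian Pauli matrix E(a,b) extended to integer-vector arguments:
    E(a,b) e_v = i^{a·b mod 4} (−1)^{v·b} e_{v ⊕ a₀}. -/
def EMat (a b : ι → ℤ) : Matrix (ι → ZMod 2) (ι → ZMod 2) ℂ :=
  Matrix.of fun u v =>
    if u = v + red2 a then Complex.I ^ (dotZ a b % 4) * (-1 : ℂ) ^ dotZ (toZ v) b else 0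

/-- 0th binary digit vector of a (componentwise `mod 2`). -/
def dig0 (a : ι → ℤ) : ι → ℤ := fun i => a i % 2

/-- 1st binary digit vector of a. -/
def dig1 (a : ι → ℤ) : ι → ℤ := fun i => (a i / 2) % 2

/-- q^{(k−1)}(v; R, a, b). -/
def qfun (k : ℕ) (R : Matrix ι ι ℤ) (a b v : ι → ℤ) : ℤ :=
  (1 - 2 ^ (k - 2)) * bil R (dig0 a) (dig0 a)
    + 2 ^ (k - 1) * (dotZ (dig0 a) (dig1 b) + dotZ (dig0 b) (dig1 a))
    + (2 + 2 ^ (k - 1)) * bil R v (dig0 a) - 4 * eta R v (dig0 a)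



theorem stmt1 {m : ℕ} (hm : 1 ≤ m)
    (R : Matrix (Fin m) (Fin m) ℤ) (hR : R.IsSymm)
    (v w : Fin m → ℤ) (hv : ∀ i, v i = 0 ∨ v i = 1) (hw : ∀ i, w i = 0 ∨ w i = 1) :
    eta R v w
        = bil (Matrix.diagonal (fun i => 1 - w i) * R * Matrix.diagonal w
            + Matrix.diagonal (Matrix.vecMul w (R * Matrix.diagonal w))) v v
    ∧ eta R v w
        = bil (Matrix.diagonal w * R * Matrix.diagonal (fun i => 1 - w i)
            + Matrix.diagonal (Matrix.vecMul w (R * Matrix.diagonal w))) v v := by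
  have hv2 : ∀ i, v i * v i = v i := fun i => by rcases hv i with h | h <;> rw [h] <;> ring
  -- key symmetry swap
  have key : (∑ i, ∑ j, R i j * (v i * v j * w j)) = ∑ i, ∑ j, R i j * (v i * v j * w i) := by
    rw [Finset.sum_comm]
    refine Finset.sum_congr rfl fun i _ => Finset.sum_congr rfl fun j _ => ?_
    rw [hR.apply]; ring
  -- eta as a double sum
  have heta : eta R v w
      = ∑ i, ∑ j, R i j * ((v i + w i - v i * w i) * (v j * w j)) := by
    unfold eta bil
    refine Finset.sum_congr rfl fun i _ => Finset.sum_congr rfl fun j _ => ?_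
    simp [Pi.add_apply, Pi.sub_apply, Pi.mul_apply]; ring
  -- diagonal part
  have hdiag : bil (Matrix.diagonal (Matrix.vecMul w (R * Matrix.diagonal w))) v v
      = ∑ i, ∑ j, R i j * (w i * w j * v j) := by
    unfold bil
    have step : ∀ i : Fin m, (∑ j, v i * (Matrix.diagonal (Matrix.vecMul w (R * Matrix.diagonal w))) i j * v j)
        = ∑ k, R k i * (w k * w i * v i) := by
      intro i
      rw [Finset.sum_eq_single i]
      · simp [Matrix.diagonal_apply_eq, Matrix.vecMul, dotProduct, Matrix.mul_diagonal,
          Finset.sum_mul, Finset.mul_sum]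
        refine Finset.sum_congr rfl fun k _ => ?_
        linear_combination (w k * R k i * w i) * hv2 i
      · intro j _ hji
        simp [Matrix.diagonal_apply_ne' _ hji]
      · simp
    calc (∑ i, ∑ j, v i * (Matrix.diagonal (Matrix.vecMul w (R * Matrix.diagonal w))) i j * v j)
        = ∑ i, ∑ k, R k i * (w k * w i * v i) := Finset.sum_congr rfl fun i _ => step i
      _ = ∑ k, ∑ i, R k i * (w k * w i * v i) := Finset.sum_comm
  -- bil of a sum splits
  have hsplit : ∀ A B : Matrix (Fin m) (Fin m) ℤ, bil (A + B) v v = bil A v v + bil B v v := by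
    intro A B
    unfold bil
    rw [← Finset.sum_add_distrib]
    refine Finset.sum_congr rfl fun i _ => ?_
    rw [← Finset.sum_add_distrib]
    refine Finset.sum_congr rfl fun j _ => ?_
    simp [Matrix.add_apply]; ring
  have hb1 : bil (Matrix.diagonal (fun i => 1 - w i) * R * Matrix.diagonal w) v v
      = ∑ i, ∑ j, R i j * (v i * (1 - w i) * w j * v j) := by
    unfold bil
    refine Finset.sum_congr rfl fun i _ => Finset.sum_congr rfl fun j _ => ?_
    simp [Matrix.mul_diagonal, Matrix.diagonal_mul]; ring
  have hb2 : bil (Matrix.diagonal w * R * Matrix.diagonal (fun i => 1 - w i)) v v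
      = ∑ i, ∑ j, R i j * (v i * w i * (1 - w j) * v j) := by
    unfold bil
    refine Finset.sum_congr rfl fun i _ => Finset.sum_congr rfl fun j _ => ?_
    simp [Matrix.mul_diagonal, Matrix.diagonal_mul]; ring
  constructor
  · rw [hsplit, hb1, hdiag, heta, ← Finset.sum_add_distrib]
    refine Finset.sum_congr rfl fun i _ => ?_
    rw [← Finset.sum_add_distrib]
    refine Finset.sum_congr rfl fun j _ => ?_
    ring
  · rw [hsplit, hb2, hdiag, heta]
    have expand : (∑ i, ∑ j, R i j * ((v i + w i - v i * w i) * (v j * w j)))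
        = (∑ i, ∑ j, R i j * (v i * w i * (1 - w j) * v j))
          + (∑ i, ∑ j, R i j * (w i * w j * v j))
          + ((∑ i, ∑ j, R i j * (v i * v j * w j)) - ∑ i, ∑ j, R i j * (v i * v j * w i)) := by
      rw [← Finset.sum_sub_distrib, ← Finset.sum_add_distrib, ← Finset.sum_add_distrib]
      refine Finset.sum_congr rfl fun i _ => ?_
      rw [← Finset.sum_sub_distrib, ← Finset.sum_add_distrib, ← Finset.sum_add_distrib]
      refine Finset.sum_congr rfl fun j _ => ?_
      ring
    rw [expand, key]
    ring

end

end CliffordHierarchy
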